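/- Let (b_n)_{n≥1} and (c_n)_{n≥1} be sequences of positive real numbers such that: for every N ≥ 1 the real numbers b_1, …, b_N, c_1, …, c_N are linearly independent over ℚ; 2n + 1 ≤ e^{b_n} for every n; and n·c_n ≤ 1 for every n. Define a sequence (λ_n)_{n≥1} by λ_{m²+j} := b_m + j·c_m for m ≥ 1 and j = 0, …, 2m. Then for every integer k ≥ 1 there exists C_k > 0 such that for all μ > 0, card{(n₁,…,n_k) ∈ ℕ^k : λ_{n₁} + ⋯ + λ_{n_k} = μ} ≤ C_k·exp((k−1)·μ/k). -/

import Mathlib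

open Finset

namespace RepCountAux

/-- remainder of `n` beyond the square below it -/
def jr (n : ℕ) : ℕ := n - n.sqrt ^ 2

lemma sqrt_add_jr (n : ℕ) : n.sqrt ^ 2 + jr n = n :=
  Nat.add_sub_cancel' (Nat.sqrt_le' n)

lemma jr_le (n : ℕ) : jr n ≤ 2 * n.sqrt := by
  have h := Nat.lt_succ_sqrt' n
  rw [Nat.succ_eq_add_one] at h
  have h2 : (n.sqrt + 1) ^ 2 = n.sqrt ^ 2 + 2 * n.sqrt + 1 := by ring
  unfold jr
  omega

variable {k : ℕ}

/-- number of coordinates whose square part is `m` -/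
def fibc (v : Fin k → ℕ) (m : ℕ) : ℕ := (univ.filter fun i => (v i).sqrt = m).card

/-- sum of the remainders over coordinates whose square part is `m` -/
def jsum (v : Fin k → ℕ) (m : ℕ) : ℕ :=
  ∑ i ∈ univ.filter (fun i => (v i).sqrt = m), jr (v i)

/-- the value `λ_{v i}` written in terms of `b` and `c` -/
def L (b c : ℕ → ℝ) (v : Fin k → ℕ) (i : Fin k) : ℝ :=
  b ((v i).sqrt) + (jr (v i) : ℝ) * c ((v i).sqrt)

lemma group_sum (b c : ℕ → ℝ) (v : Fin k → ℕ) {N : ℕ}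
    (h1 : ∀ i, 1 ≤ (v i).sqrt) (hN : ∀ i, (v i).sqrt ≤ N) :
    ∑ i, L b c v i
      = ∑ t : Fin N, ((fibc v (t.1 + 1) : ℝ) * b (t.1 + 1)
          + (jsum v (t.1 + 1) : ℝ) * c (t.1 + 1)) := by
  classical
  have hlt : ∀ i, (v i).sqrt - 1 < N := fun i => by have := h1 i; have := hN i; omega
  set gcl : Fin k → Fin N := fun i => ⟨(v i).sqrt - 1, hlt i⟩ with hgcl
  have hmaps : ∀ i ∈ (univ : Finset (Fin k)), gcl i ∈ (univ : Finset (Fin N)) :=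
    fun _ _ => mem_univ _
  rw [← Finset.sum_fiberwise_of_maps_to hmaps (L b c v)]
  refine Finset.sum_congr rfl fun t _ => ?_
  have hfil : (univ.filter fun i => gcl i = t) = univ.filter fun i => (v i).sqrt = t.1 + 1 := by
    apply Finset.filter_congr
    intro i _
    simp only [hgcl, Fin.ext_iff]
    have := h1 i
    have := t.2
    constructor <;> intro h <;> omega
  rw [hfil]
  have hterm : ∀ i ∈ univ.filter (fun i => (v i).sqrt = t.1 + 1),
      L b c v i = b (t.1 + 1) + (jr (v i) : ℝ) * c (t.1 + 1) := by
    intro i hi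
    have := (Finset.mem_filter.1 hi).2
    simp [L, this]
  rw [Finset.sum_congr rfl hterm, Finset.sum_add_distrib, Finset.sum_const, ← Finset.sum_mul]
  unfold fibc jsum
  push_cast
  ring

lemma rigidity (b c : ℕ → ℝ)
    (hind : ∀ N : ℕ, 1 ≤ N →
      LinearIndependent ℚ (fun i : Fin N ⊕ Fin N =>
        (Sum.elim (fun j : Fin N => b (j.1 + 1)) (fun j : Fin N => c (j.1 + 1)) i : ℝ)))
    (v w : Fin k → ℕ) (hv : ∀ i, 1 ≤ v i) (hw : ∀ i, 1 ≤ w i)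
    (hsum : ∑ i, L b c v i = ∑ i, L b c w i) (m : ℕ) :
    fibc v m = fibc w m ∧ jsum v m = jsum w m := by
  classical
  set N : ℕ := 1 + univ.sup (fun i => max (v i).sqrt (w i).sqrt) with hNdef
  have hN1 : 1 ≤ N := by omega
  have hv1 : ∀ i, 1 ≤ (v i).sqrt := fun i => Nat.sqrt_pos.2 (hv i)
  have hw1 : ∀ i, 1 ≤ (w i).sqrt := fun i => Nat.sqrt_pos.2 (hw i)
  have hvN' : ∀ i, (v i).sqrt ≤ N := fun i => by
    have h := Finset.le_sup (f := fun i => max (v i).sqrt (w i).sqrt) (mem_univ i)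
    have h' : (v i).sqrt ≤ univ.sup (fun i => max (v i).sqrt (w i).sqrt) :=
      le_trans (le_max_left _ _) h
    omega
  have hwN' : ∀ i, (w i).sqrt ≤ N := fun i => by
    have h := Finset.le_sup (f := fun i => max (v i).sqrt (w i).sqrt) (mem_univ i)
    have h' : (w i).sqrt ≤ univ.sup (fun i => max (v i).sqrt (w i).sqrt) :=
      le_trans (le_max_right _ _) h
    omega
  set g : Fin N ⊕ Fin N → ℚ := Sum.elim
      (fun t => (fibc v (t.1 + 1) : ℚ) - fibc w (t.1 + 1))
      (fun t => (jsum v (t.1 + 1) : ℚ) - jsum w (t.1 + 1)) with hg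
  have hzero : ∑ x : Fin N ⊕ Fin N, g x •
      (Sum.elim (fun j : Fin N => b (j.1 + 1)) (fun j : Fin N => c (j.1 + 1)) x : ℝ) = 0 := by
    rw [Fintype.sum_sum_type]
    simp only [hg, Sum.elim_inl, Sum.elim_inr, Rat.smul_def]
    push_cast
    have h1 := group_sum b c v hv1 hvN'
    have h2 := group_sum b c w hw1 hwN'
    rw [h1, h2, Finset.sum_add_distrib, Finset.sum_add_distrib] at hsum
    simp only [sub_mul]
    rw [Finset.sum_sub_distrib, Finset.sum_sub_distrib]
    linarith
  have hg0 := Fintype.linearIndependent_iff.1 (hind N hN1) g hzero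
  by_cases hm : 1 ≤ m ∧ m ≤ N
  · obtain ⟨hm1, hmN⟩ := hm
    have hlt : m - 1 < N := by omega
    have e1 := hg0 (Sum.inl ⟨m - 1, hlt⟩)
    have e2 := hg0 (Sum.inr ⟨m - 1, hlt⟩)
    simp only [hg, Sum.elim_inl, Sum.elim_inr] at e1 e2
    have hm' : m - 1 + 1 = m := by omega
    rw [hm'] at e1 e2
    have e1' := sub_eq_zero.1 e1
    have e2' := sub_eq_zero.1 e2
    exact ⟨by exact_mod_cast e1', by exact_mod_cast e2'⟩
  · have hv' : ∀ i ∈ (univ : Finset (Fin k)), ¬ ((v i).sqrt = m) := fun i _ => by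
      have := hv1 i; have := hvN' i; omega
    have hw' : ∀ i ∈ (univ : Finset (Fin k)), ¬ ((w i).sqrt = m) := fun i _ => by
      have := hw1 i; have := hwN' i; omega
    have h1 := Finset.filter_false_of_mem hv'
    have h2 := Finset.filter_false_of_mem hw'
    constructor <;> simp [fibc, jsum, h1, h2]

/-- the canonical (maximal) representative of the fiber of `f` containing `i` -/
def rep (f : Fin k → ℕ) (i : Fin k) : Fin k :=
  (univ.filter fun i' => f i' = f i).max' ⟨i, Finset.mem_filter.2 ⟨mem_univ i, rfl⟩⟩

lemma rep_mem (f : Fin k → ℕ) (i : Fin k) :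
    rep f i ∈ univ.filter fun i' => f i' = f i := Finset.max'_mem _ _

lemma rep_spec (f : Fin k → ℕ) (i : Fin k) : f (rep f i) = f i :=
  (Finset.mem_filter.1 (rep_mem f i)).2

lemma rep_le (f : Fin k → ℕ) {i j : Fin k} (h : f j = f i) : j ≤ rep f i := by
  unfold rep
  apply Finset.le_max'
  exact Finset.mem_filter.2 ⟨mem_univ _, h⟩

lemma rep_eq (f : Fin k → ℕ) {i i' : Fin k} (h : f i' = f i) : rep f i' = rep f i :=
  le_antisymm (rep_le f ((rep_spec f i').trans h)) (rep_le f ((rep_spec f i).trans h.symm))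

lemma slice_card (f : Fin k → ℕ) (T : Set (Fin k → ℕ))
    (hT1 : ∀ v ∈ T, ∀ i, (v i).sqrt = f i)
    (hTj : ∀ v ∈ T, ∀ u ∈ T, ∀ m, jsum v m = jsum u m) :
    T.Finite ∧ T.ncard ≤ ∏ i, (if rep f i = i then 1 else 2 * f i + 1) := by
  classical
  set w : Fin k → ℕ := fun i => if rep f i = i then 1 else 2 * f i + 1 with hw
  have hφlt : ∀ v ∈ T, ∀ i, (if rep f i = i then 0 else jr (v i)) < w i := by
    intro v hv i
    by_cases h : rep f i = i
    · simp [hw, h]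
    · simp only [hw, h, if_false]
      have h1 := jr_le (v i)
      rw [hT1 v hv i] at h1
      omega
  set φ : T → (∀ i, Fin (w i)) :=
    fun v i => ⟨if rep f i = i then 0 else jr (v.1 i), hφlt v.1 v.2 i⟩ with hφ
  have hinj : Function.Injective φ := by
    rintro ⟨v, hv⟩ ⟨u, hu⟩ h
    have heq : ∀ i, (if rep f i = i then 0 else jr (v i))
        = (if rep f i = i then 0 else jr (u i)) := by
      intro i
      have := congrFun h i
      simpa [hφ, Fin.ext_iff] using this
    have hnotmax : ∀ i, ¬ (rep f i = i) → jr (v i) = jr (u i) := by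
      intro i h'
      have := heq i
      simpa [h'] using this
    have hjr : ∀ i, jr (v i) = jr (u i) := by
      intro i
      by_cases h' : rep f i = i
      · have hsumj := hTj v hv u hu (f i)
        have hsv : (univ.filter fun i' => (v i').sqrt = f i)
            = univ.filter fun i' => f i' = f i := by
          apply Finset.filter_congr; intro j _; rw [hT1 v hv j]
        have hsu : (univ.filter fun i' => (u i').sqrt = f i)
            = univ.filter fun i' => f i' = f i := by
          apply Finset.filter_congr; intro j _; rw [hT1 u hu j]
        have hiin : i ∈ univ.filter fun i' => f i' = f i :=
          Finset.mem_filter.2 ⟨mem_univ _, rfl⟩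
        unfold jsum at hsumj
        rw [hsv, hsu, ← Finset.add_sum_erase _ _ hiin, ← Finset.add_sum_erase _ _ hiin] at hsumj
        have herase : ∀ i' ∈ (univ.filter fun i' => f i' = f i).erase i,
            jr (v i') = jr (u i') := by
          intro i' hi'
          have hne : i' ≠ i := (Finset.mem_erase.1 hi').1
          have hfi' : f i' = f i := (Finset.mem_filter.1 (Finset.mem_erase.1 hi').2).2
          apply hnotmax
          rw [rep_eq f hfi', h']
          exact Ne.symm hne
        rw [Finset.sum_congr rfl herase] at hsumj
        omega
      · exact hnotmax i h'
    apply Subtype.ext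
    funext i
    show v i = u i
    have h1 : v i = (v i).sqrt ^ 2 + jr (v i) := (sqrt_add_jr _).symm
    rw [h1, hT1 v hv i, hjr i, ← hT1 u hu i, sqrt_add_jr]
  haveI : Finite T := Finite.of_injective φ hinj
  refine ⟨Set.finite_coe_iff.1 inferInstance, ?_⟩
  calc T.ncard = Nat.card T := (Nat.card_coe_set_eq T).symm
    _ ≤ Nat.card (∀ i, Fin (w i)) := Nat.card_le_card_of_injective φ hinj
    _ = ∏ i, w i := by simp [Nat.card_pi]

lemma prod_bound (b : ℕ → ℝ) (hbpos : ∀ n, 1 ≤ n → 0 < b n)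
    (hb2 : ∀ n : ℕ, 1 ≤ n → (2 * n + 1 : ℝ) ≤ Real.exp (b n))
    (hk : 1 ≤ k) (f : Fin k → ℕ) (hf1 : ∀ i, 1 ≤ f i)
    (μ : ℝ) (hμ : ∑ i, b (f i) ≤ μ) :
    ((∏ i, (if rep f i = i then 1 else 2 * f i + 1) : ℕ) : ℝ)
      ≤ Real.exp (((k : ℝ) - 1) * μ / k) := by
  classical
  have hk0 : (0 : ℝ) < k := by exact_mod_cast hk
  have step1 : ∀ i ∈ (univ : Finset (Fin k)),
      ((if rep f i = i then 1 else 2 * f i + 1 : ℕ) : ℝ)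
        ≤ Real.exp (if rep f i = i then 0 else b (f i)) := by
    intro i _
    by_cases h : rep f i = i
    · simp [h, Real.exp_zero]
    · simp only [h, if_false]
      have := hb2 (f i) (hf1 i)
      push_cast
      linarith
  have hchain : ((∏ i, (if rep f i = i then 1 else 2 * f i + 1) : ℕ) : ℝ)
      ≤ Real.exp (∑ i, if rep f i = i then 0 else b (f i)) := by
    rw [Nat.cast_prod, Real.exp_sum]
    exact Finset.prod_le_prod (fun i _ => by positivity) step1
  refine le_trans hchain (Real.exp_le_exp.2 ?_)
  -- now the sum inequality
  set Btot : ℝ := ∑ i, b (f i) with hBtot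
  set Bfix : ℝ := ∑ i ∈ univ.filter (fun i => rep f i = i), b (f i) with hBfix
  have hsplit : (∑ i, if rep f i = i then 0 else b (f i)) = Btot - Bfix := by
    have := Finset.sum_filter_add_sum_filter_not (univ : Finset (Fin k))
      (fun i => rep f i = i) (fun i => b (f i))
    have h2 : (∑ i, if rep f i = i then 0 else b (f i))
        = ∑ i ∈ univ.filter (fun i => ¬ rep f i = i), b (f i) := by
      rw [Finset.sum_filter]
      apply Finset.sum_congr rfl
      intro i _
      by_cases h : rep f i = i <;> simp [h]
    rw [h2]
    rw [hBtot, hBfix]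
    linarith
  have hBpos : ∀ i : Fin k, 0 < b (f i) := fun i => hbpos _ (hf1 i)
  have hBtot0 : 0 ≤ Btot := Finset.sum_nonneg fun i _ => (hBpos i).le
  have hcomp : Btot ≤ (k : ℝ) * Bfix := by
    have h1 : Btot = ∑ i, b (f (rep f i)) := by
      apply Finset.sum_congr rfl
      intro i _
      rw [rep_spec f i]
    have h2 := Finset.sum_comp (s := (univ : Finset (Fin k))) (fun y => b (f y)) (rep f)
    have h3 : ∑ y ∈ univ.image (rep f),
        ((univ.filter fun i => rep f i = y).card • b (f y) : ℝ)
        ≤ ∑ y ∈ univ.image (rep f), (k : ℝ) * b (f y) := by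
      apply Finset.sum_le_sum
      intro y hy
      rw [nsmul_eq_mul]
      apply mul_le_mul_of_nonneg_right _ (hBpos y).le
      have : (univ.filter fun i => rep f i = y).card ≤ (univ : Finset (Fin k)).card :=
        Finset.card_le_card (Finset.filter_subset _ _)
      simp only [Finset.card_univ, Fintype.card_fin] at this
      exact_mod_cast this
    have h4 : ∑ y ∈ univ.image (rep f), (k : ℝ) * b (f y)
        ≤ ∑ y ∈ univ.filter (fun i => rep f i = i), (k : ℝ) * b (f y) := by
      apply Finset.sum_le_sum_of_subset_of_nonneg
      · intro y hy
        obtain ⟨i, _, hi⟩ := Finset.mem_image.1 hy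
        refine Finset.mem_filter.2 ⟨mem_univ _, ?_⟩
        rw [← hi]
        exact rep_eq f (rep_spec f i)
      · intro y _ _
        exact mul_nonneg hk0.le (hBpos y).le
    calc Btot = ∑ i, b (f (rep f i)) := h1
      _ = ∑ y ∈ univ.image (rep f), (univ.filter fun i => rep f i = y).card • b (f y) := h2
      _ ≤ ∑ y ∈ univ.image (rep f), (k : ℝ) * b (f y) := h3
      _ ≤ ∑ y ∈ univ.filter (fun i => rep f i = i), (k : ℝ) * b (f y) := h4
      _ = (k : ℝ) * Bfix := by rw [hBfix, Finset.mul_sum]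
  have hk1 : (1 : ℝ) ≤ (k : ℝ) := by exact_mod_cast hk
  rw [hsplit, le_div_iff₀ hk0]
  nlinarith [mul_le_mul_of_nonneg_left hμ (by linarith : (0:ℝ) ≤ (k : ℝ) - 1)]

lemma ncard_biUnion_le {α ι : Type*} (s : Finset ι) (t : ι → Set α) :
    (⋃ i ∈ s, t i).ncard ≤ ∑ i ∈ s, (t i).ncard := by
  classical
  induction s using Finset.induction_on with
  | empty => simp
  | @insert a s ha ih =>
    rw [Finset.set_biUnion_insert, Finset.sum_insert ha]
    exact le_trans (Set.ncard_union_le _ _) (Nat.add_le_add_left ih _)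

lemma ncard_iUnion_le {α ι : Type*} [Fintype ι] (t : ι → Set α) :
    (⋃ i, t i).ncard ≤ ∑ i, (t i).ncard := by
  classical
  have h : ⋃ i, t i = ⋃ i ∈ (univ : Finset ι), t i := by simp
  rw [h]
  exact ncard_biUnion_le _ _

end RepCountAux

open RepCountAux Finset in
/-- Combinatorial lemma: with `λ_{m²+j} = b_m + j c_m` (`m ≥ 1`, `0 ≤ j ≤ 2m`), where the
`b`'s and `c`'s are ℚ-linearly independent, `2n+1 ≤ e^{b_n}` and `n c_n ≤ 1`, for every
`k ≥ 1` there is `C_k > 0` with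
`card{(n₁,…,n_k) : λ_{n₁}+⋯+λ_{n_k} = μ} ≤ C_k e^{(k−1)μ/k}` for all `μ > 0`. -/
theorem representation_count_bound (b c : ℕ → ℝ)
    (hbpos : ∀ n, 1 ≤ n → 0 < b n) (hcpos : ∀ n, 1 ≤ n → 0 < c n)
    (hind : ∀ N : ℕ, 1 ≤ N →
      LinearIndependent ℚ (fun i : Fin N ⊕ Fin N =>
        (Sum.elim (fun j : Fin N => b (j.1 + 1)) (fun j : Fin N => c (j.1 + 1)) i : ℝ)))
    (hb2 : ∀ n : ℕ, 1 ≤ n → (2 * n + 1 : ℝ) ≤ Real.exp (b n))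
    (hc1 : ∀ n : ℕ, 1 ≤ n → (n : ℝ) * c n ≤ 1)
    (l : ℕ → ℝ)
    (hl : ∀ m : ℕ, 1 ≤ m → ∀ j : ℕ, j ≤ 2 * m → l (m ^ 2 + j) = b m + (j : ℝ) * c m) :
    ∀ k : ℕ, 1 ≤ k → ∃ C > (0 : ℝ), ∀ μ > (0 : ℝ),
      (Set.ncard {v : Fin k → ℕ | (∀ i, 1 ≤ v i) ∧ ∑ i, l (v i) = μ} : ℝ) ≤
        C * Real.exp (((k : ℝ) - 1) * μ / k) := by
  classical
  intro k hk
  have hk0 : (0 : ℝ) < (k : ℝ) := by exact_mod_cast hk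
  refine ⟨(k : ℝ) ^ k, by positivity, ?_⟩
  intro μ hμ
  set S := {v : Fin k → ℕ | (∀ i, 1 ≤ v i) ∧ ∑ i, l (v i) = μ} with hS
  have hexp0 : (0 : ℝ) < Real.exp (((k : ℝ) - 1) * μ / k) := Real.exp_pos _
  have hLl : ∀ v ∈ S, ∀ i : Fin k, l (v i) = L b c v i := by
    intro v hv i
    have h1 : 1 ≤ (v i).sqrt := Nat.sqrt_pos.2 (hv.1 i)
    have h2 := hl (v i).sqrt h1 (jr (v i)) (jr_le (v i))
    rw [sqrt_add_jr] at h2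
    exact h2
  have hsumL : ∀ v ∈ S, ∑ i, L b c v i = μ := by
    intro v hv
    rw [← hv.2]
    exact (Finset.sum_congr rfl fun i _ => (hLl v hv i).symm)
  rcases Set.eq_empty_or_nonempty S with hE | ⟨v₀, hv₀⟩
  · rw [hE]
    simp only [Set.ncard_empty, Nat.cast_zero]
    positivity
  have hrig : ∀ v ∈ S, ∀ u ∈ S, ∀ m, fibc v m = fibc u m ∧ jsum v m = jsum u m :=
    fun v hv u hu m => rigidity b c hind v u hv.1 hu.1
      (by rw [hsumL v hv, hsumL u hu]) m
  set F : (Fin k → Fin k) → (Fin k → ℕ) := fun τ i => (v₀ (τ i)).sqrt with hF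
  set T : (Fin k → Fin k) → Set (Fin k → ℕ) :=
    fun τ => {v | v ∈ S ∧ ∀ i, (v i).sqrt = F τ i} with hT
  have hcover : S ⊆ ⋃ τ, T τ := by
    intro v hv
    have hex : ∀ i : Fin k, ∃ i', (v₀ i').sqrt = (v i).sqrt := by
      intro i
      have hcard := (hrig v hv v₀ hv₀ ((v i).sqrt)).1
      have hpos : 0 < fibc v ((v i).sqrt) :=
        Finset.card_pos.2 ⟨i, Finset.mem_filter.2 ⟨mem_univ _, rfl⟩⟩
      rw [hcard] at hpos
      obtain ⟨i', hi'⟩ := Finset.card_pos.1 hpos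
      exact ⟨i', (Finset.mem_filter.1 hi').2⟩
    choose τ hτ using hex
    exact Set.mem_iUnion.2 ⟨τ, hv, fun i => (hτ i).symm⟩
  have hsliceF : ∀ τ, (T τ).Finite ∧
      (T τ).ncard ≤ ∏ i, (if rep (F τ) i = i then 1 else 2 * F τ i + 1) :=
    fun τ => slice_card (F τ) (T τ) (fun v hv => hv.2)
      (fun v hv u hu m => (hrig v hv.1 u hu.1 m).2)
  have hslice : ∀ τ, ((T τ).ncard : ℝ) ≤ Real.exp (((k : ℝ) - 1) * μ / k) := by
    intro τ
    rcases Set.eq_empty_or_nonempty (T τ) with h | ⟨v₁, hv₁⟩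
    · rw [h]
      simpa using hexp0.le
    · have hf1 : ∀ i, 1 ≤ F τ i := fun i => by
        rw [← hv₁.2 i]; exact Nat.sqrt_pos.2 (hv₁.1.1 i)
      have hbsum : ∑ i, b (F τ i) ≤ μ := by
        rw [← hsumL v₁ hv₁.1]
        apply Finset.sum_le_sum
        intro i _
        unfold L
        rw [hv₁.2 i]
        have hc : 0 ≤ (jr (v₁ i) : ℝ) * c (F τ i) :=
          mul_nonneg (Nat.cast_nonneg _) (hcpos _ (hf1 i)).le
        linarith
      calc ((T τ).ncard : ℝ)
          ≤ ((∏ i, (if rep (F τ) i = i then 1 else 2 * F τ i + 1) : ℕ) : ℝ) :=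
            Nat.cast_le.2 (hsliceF τ).2
        _ ≤ Real.exp (((k : ℝ) - 1) * μ / k) :=
            prod_bound b hbpos hb2 hk (F τ) hf1 μ hbsum
  have h1 : (S.ncard : ℝ) ≤ ∑ τ : Fin k → Fin k, ((T τ).ncard : ℝ) := by
    have h2 := Set.ncard_le_ncard hcover (Set.finite_iUnion (fun τ => (hsliceF τ).1))
    have h3 := ncard_iUnion_le T
    exact_mod_cast le_trans h2 h3
  calc (S.ncard : ℝ) ≤ ∑ τ : Fin k → Fin k, ((T τ).ncard : ℝ) := h1
    _ ≤ ∑ _τ : Fin k → Fin k, Real.exp (((k : ℝ) - 1) * μ / k) :=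
        Finset.sum_le_sum fun τ _ => hslice τ
    _ = (Fintype.card (Fin k → Fin k) : ℝ) * Real.exp (((k : ℝ) - 1) * μ / k) := by
        rw [Finset.sum_const, nsmul_eq_mul, Finset.card_univ]
    _ = (k : ℝ) ^ k * Real.exp (((k : ℝ) - 1) * μ / k) := by
        rw [Fintype.card_fun]
        push_cast
        simp
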